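/- Let M be a positively ordered semigroup (commutative monoid with a translation-invariant partial order in which 0 is the least element) that is strongly finite, i.e., for every order ideal I the quotient M/I is finite (x+y ≤ y in M/I implies x = 0). If x + z ≤ y + z for x, y, z ∈ M, then the order ideal generated by x is contained in the order ideal generated by y. -/

import Mathlib

/-- An order ideal of a positively ordered semigroup: a submonoid that is downward closed. -/
def IsOrderIdeal {M : Type*} [AddCommMonoid M] [PartialOrder M] (I : Set M) : Prop :=
  (0 : M) ∈ I ∧ (∀ a b : M, a ∈ I → b ∈ I → a + b ∈ I) ∧
    ∀ a b : M, a ≤ b → b ∈ I → a ∈ I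

/-- The order ideal generated by `x`: `I(x) = {z | z ≤ n • x for some n}`. -/
def idealGen {M : Type*} [AddCommMonoid M] [PartialOrder M] (x : M) : Set M :=
  {z : M | ∃ n : ℕ, z ≤ n • x}

/-- `M` is strongly finite: for every order ideal `I`, the quotient `M/I` is finite,
i.e. `[x] + [y] ≤ [y]` (that is, `x + y ≤ y + v` for some `v ∈ I`) implies `x ∈ I`. -/
def StronglyFinite (M : Type*) [AddCommMonoid M] [PartialOrder M] : Prop :=
  ∀ I : Set M, IsOrderIdeal I → ∀ x y : M, (∃ v ∈ I, x + y ≤ y + v) → x ∈ I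

theorem stmt_0 {M : Type*} [AddCommMonoid M] [PartialOrder M]
    [CovariantClass M M (· + ·) (· ≤ ·)]
    (hpos : ∀ x : M, 0 ≤ x) (hsf : StronglyFinite M)
    (x y z : M) (h : x + z ≤ y + z) :
    idealGen x ⊆ idealGen y := by
  -- `idealGen y` is an order ideal
  have hideal : IsOrderIdeal (idealGen y) := by
    refine ⟨⟨0, by simpa using le_refl (0 : M)⟩, ?_, ?_⟩
    · rintro a b ⟨n, ha⟩ ⟨m, hb⟩
      refine ⟨n + m, ?_⟩
      calc a + b = b + a := add_comm a b
        _ ≤ b + n • y := add_le_add_right ha b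
        _ = n • y + b := add_comm _ _
        _ ≤ n • y + m • y := add_le_add_right hb _
        _ = (n + m) • y := (add_nsmul y n m).symm
    · rintro a b hab ⟨n, hb⟩
      exact ⟨n, hab.trans hb⟩
  -- `x ∈ idealGen y` by strong finiteness
  have hx : x ∈ idealGen y := by
    apply hsf (idealGen y) hideal x z
    exact ⟨y, ⟨1, by simp⟩, h.trans (le_of_eq (add_comm y z))⟩
  obtain ⟨n, hxn⟩ := hx
  rintro w ⟨m, hw⟩
  refine ⟨m * n, hw.trans ?_⟩
  calc m • x ≤ m • (n • y) := nsmul_le_nsmul_right hxn m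
    _ = (m * n) • y := (mul_nsmul' y m n).symm
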